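/- The graph on sign vectors in {+,-}^n with exactly k sign changes (considered modulo global negation), where two vectors are adjacent if they differ in exactly one component (up to global sign), is connected. -/

import Mathlib

open scoped BigOperators

/-- Number of sign changes between consecutive entries of a list of reals. -/
noncomputable def listVar : List ℝ → ℕ
  | a :: b :: t => (if a * b < 0 then 1 else 0) + listVar (b :: t)
  | _ => 0

/-- `var v` : the number of sign changes of `v`, ignoring zero entries. -/
noncomputable def var {n : ℕ} (v : Fin n → ℝ) : ℕ :=
  listVar ((List.ofFn v).filter (fun x => x ≠ 0))

/-- `varbar v` : the maximum of `var w` over all `w` agreeing with `v` on the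
nonzero entries of `v`. -/
noncomputable def varbar {n : ℕ} (v : Fin n → ℝ) : ℕ :=
  sSup {m | ∃ w : Fin n → ℝ, (∀ i, v i ≠ 0 → w i = v i) ∧ var w = m}

/-- `altv v = (v 0, -v 1, v 2, ...)`. -/
def altv {n : ℕ} (v : Fin n → ℝ) : Fin n → ℝ := fun i => (-1 : ℝ) ^ (i : ℕ) * v i

/-- A vector with entries in `{0, 1, -1}`, representing a sign vector. -/
def IsSignVec {n : ℕ} (σ : Fin n → ℝ) : Prop := ∀ i, σ i = 0 ∨ σ i = 1 ∨ σ i = -1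

/-- Adjacency in the graph on sign vectors in `{+,-}^n` with exactly `k` sign changes,
considered up to global negation: two such vectors are adjacent iff one differs from the
other, or from its negation, in exactly one component. -/
noncomputable def adjRel (n k : ℕ) (x y : Fin n → ℝ) : Prop :=
  ((∀ i, x i = 1 ∨ x i = -1) ∧ (∀ i, y i = 1 ∨ y i = -1) ∧ var x = k ∧ var y = k) ∧
  ((∃! i, x i ≠ y i) ∨ (∃! i, x i ≠ -y i))

namespace Stmt8
open Finset

open Finset

noncomputable def ext {n : ℕ} (σ : Fin n → ℝ) : ℕ → ℝ :=
  fun i => if h : i < n then σ ⟨i, h⟩ else 0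

lemma ext_lt {n : ℕ} (σ : Fin n → ℝ) {i : ℕ} (h : i < n) : ext σ i = σ ⟨i, h⟩ := dif_pos h

lemma pm_ne_zero {a : ℝ} (ha : a = 1 ∨ a = -1) : a ≠ 0 := by
  rcases ha with rfl | rfl <;> norm_num

lemma listVar_eq_sum (l : List ℝ) :
    listVar l = ∑ i ∈ Finset.range (l.length - 1),
      (if l.getD i 0 * l.getD (i+1) 0 < 0 then 1 else 0) := by
  match l with
  | [] => simp [listVar]
  | [a] => simp [listVar]
  | a :: b :: t =>
    rw [listVar, listVar_eq_sum (b :: t)]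
    simp only [List.length_cons]
    rw [show t.length + 1 + 1 - 1 = t.length + 1 by omega, Finset.sum_range_succ']
    simp only [List.getD_cons_succ, List.getD_cons_zero]
    rw [show t.length + 1 - 1 = t.length by omega]
    omega

lemma getD_ofFn {n : ℕ} (σ : Fin n → ℝ) (i : ℕ) :
    (List.ofFn σ).getD i 0 = ext σ i := by
  by_cases h : i < n
  · rw [List.getD_eq_getElem _ _ (by simpa using h), ext_lt σ h]
    simp
  · rw [List.getD_eq_default _ _ (by simpa using not_lt.mp h)]
    simp [ext, h]

lemma var_eq_sum {n : ℕ} (σ : Fin n → ℝ) (hσ : ∀ i, σ i ≠ 0) :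
    var σ = ∑ p ∈ range (n-1), (if ext σ p * ext σ (p+1) < 0 then 1 else 0) := by
  have hf : (List.ofFn σ).filter (fun x => x ≠ 0) = List.ofFn σ := by
    apply List.filter_eq_self.mpr
    intro a ha
    simp only [List.mem_ofFn] at ha
    obtain ⟨i, rfl⟩ := ha
    simp [hσ i]
  rw [var, hf, listVar_eq_sum]
  simp only [List.length_ofFn]
  exact Finset.sum_congr rfl fun p _ => by rw [getD_ofFn, getD_ofFn]


open Finset
noncomputable def Phi {n : ℕ} (σ : Fin n → ℝ) : ℕ :=
  ∑ p ∈ range (n-1), (if ext σ p * ext σ (p+1) < 0 then (p+1) else 0)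

lemma Phi_lt {n : ℕ} (hn : 0 < n) (σ : Fin n → ℝ) : Phi σ < n * n := by
  have h1 : Phi σ ≤ ∑ p ∈ range (n-1), n := by
    apply Finset.sum_le_sum
    intro p hp
    simp only [mem_range] at hp
    split_ifs <;> omega
  rw [Finset.sum_const, smul_eq_mul, card_range] at h1
  have : (n-1) * n < n * n := (Nat.mul_lt_mul_right hn).mpr (by omega)
  omega

lemma ext_update {n : ℕ} (σ : Fin n → ℝ) (j : Fin n) (v : ℝ) (i : ℕ) :
    ext (Function.update σ j v) i = if i = (j:ℕ) then v else ext σ i := by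
  by_cases h : i < n
  · rw [ext_lt _ h, Function.update_apply]
    by_cases hij : i = (j:ℕ)
    · rw [if_pos hij, if_pos (Fin.ext hij)]
    · rw [if_neg hij, if_neg (fun he => hij (by rw [← he])), ext_lt _ h]
  · have : i ≠ (j:ℕ) := by have := j.isLt; omega
    simp [ext, h, this]

lemma sum_two_diff {m a b : ℕ} (g g' : ℕ → ℕ) (ha : a < m) (hb : b < m) (hab : a ≠ b)
    (h : ∀ i, i < m → i ≠ a → i ≠ b → g i = g' i) :
    ∑ i ∈ range m, g i + (g' a + g' b) = ∑ i ∈ range m, g' i + (g a + g b) := by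
  have hbm : b ∈ (range m).erase a := by simp [Finset.mem_erase, hab.symm, hb]
  have ham : a ∈ range m := by simp [ha]
  have e1 : ∑ i ∈ range m, g i = g a + (g b + ∑ i ∈ ((range m).erase a).erase b, g i) := by
    rw [Finset.add_sum_erase _ g hbm, Finset.add_sum_erase _ g ham]
  have e2 : ∑ i ∈ range m, g' i = g' a + (g' b + ∑ i ∈ ((range m).erase a).erase b, g' i) := by
    rw [Finset.add_sum_erase _ g' hbm, Finset.add_sum_erase _ g' ham]
  have e3 : ∑ i ∈ ((range m).erase a).erase b, g i
      = ∑ i ∈ ((range m).erase a).erase b, g' i := by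
    apply Finset.sum_congr rfl
    intro i hi
    simp only [Finset.mem_erase, Finset.mem_range] at hi
    exact h i hi.2.2 hi.2.1 hi.1
  omega

/-- The key move: if there is a sign change at pair `p` and none at pair `p+1`
(with `p+2 < n`), flipping component `p+1` preserves `var` and increases `Phi` by 1. -/
lemma move {n : ℕ} (σ : Fin n → ℝ) (hσ : ∀ i, σ i = 1 ∨ σ i = -1)
    (p : ℕ) (hp : p + 2 < n)
    (hc : ext σ p * ext σ (p+1) < 0) (hnc : ¬ ext σ (p+1) * ext σ (p+2) < 0) :
    ∃ σ' : Fin n → ℝ, (∀ i, σ' i = 1 ∨ σ' i = -1) ∧ var σ' = var σ ∧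
      Phi σ' = Phi σ + 1 ∧ (∃! i, σ i ≠ σ' i) := by
  have hj : p + 1 < n := by omega
  set j : Fin n := ⟨p+1, hj⟩ with hjdef
  set σ' : Fin n → ℝ := Function.update σ j (-σ j) with hσ'def
  have hσ' : ∀ i, σ' i = 1 ∨ σ' i = -1 := by
    intro i
    by_cases hne : i = j
    · subst hne
      rw [hσ'def, Function.update_self]
      rcases hσ j with h | h <;> simp [h]
    · rw [hσ'def, Function.update_of_ne hne]
      exact hσ i
  have hext : ∀ i : ℕ, ext σ' i = if i = p+1 then -ext σ (p+1) else ext σ i := by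
    intro i
    rw [hσ'def, ext_update, ext_lt σ hj]
  have hy : ext σ p = 1 ∨ ext σ p = -1 := by rw [ext_lt σ (show p < n by omega)]; exact hσ _
  have hx : ext σ (p+1) = 1 ∨ ext σ (p+1) = -1 := by rw [ext_lt σ hj]; exact hσ _
  have hz : ext σ (p+2) = 1 ∨ ext σ (p+2) = -1 := by rw [ext_lt σ hp]; exact hσ _
  have f3 : ¬ (ext σ p * -ext σ (p+1) < 0) := by
    rcases hy with h1 | h1 <;> rcases hx with h2 | h2 <;>
      rw [h1, h2] at hc ⊢ <;> revert hc <;> norm_num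
  have f4 : -ext σ (p+1) * ext σ (p+2) < 0 := by
    rcases hx with h2 | h2 <;> rcases hz with h3 | h3 <;>
      rw [h2, h3] at hnc ⊢ <;> revert hnc <;> norm_num
  have e1 : ext σ' p = ext σ p := by rw [hext]; exact if_neg (by omega)
  have e2 : ext σ' (p+1) = -ext σ (p+1) := by rw [hext, if_pos rfl]
  have e3 : ext σ' (p+2) = ext σ (p+2) := by rw [hext]; exact if_neg (by omega)
  have hpa : p < n - 1 := by omega
  have hpb : p + 1 < n - 1 := by omega
  refine ⟨σ', hσ', ?_, ?_, ?_⟩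
  · -- var σ' = var σ
    rw [var_eq_sum σ' (fun i => pm_ne_zero (hσ' i)), var_eq_sum σ (fun i => pm_ne_zero (hσ i))]
    have key := sum_two_diff (m := n-1) (a := p) (b := p+1)
      (fun i => if ext σ i * ext σ (i+1) < 0 then 1 else 0)
      (fun i => if ext σ' i * ext σ' (i+1) < 0 then 1 else 0)
      hpa hpb (by omega) ?_
    · simp only [e1, e2, e3, if_pos hc, if_neg hnc, if_neg f3, if_pos f4] at key
      omega
    · intro i _ h1 h2
      simp only [hext i, hext (i+1), if_neg h2, if_neg (show i+1 ≠ p+1 by omega)]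
  · -- Phi σ' = Phi σ + 1
    unfold Phi
    have key := sum_two_diff (m := n-1) (a := p) (b := p+1)
      (fun i => if ext σ i * ext σ (i+1) < 0 then (i+1) else 0)
      (fun i => if ext σ' i * ext σ' (i+1) < 0 then (i+1) else 0)
      hpa hpb (by omega) ?_
    · simp only [e1, e2, e3, if_pos hc, if_neg hnc, if_neg f3, if_pos f4] at key
      omega
    · intro i _ h1 h2
      simp only [hext i, hext (i+1), if_neg h2, if_neg (show i+1 ≠ p+1 by omega)]
  · -- exactly one difference
    refine ⟨j, ?_, ?_⟩
    · show σ j ≠ σ' j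
      rw [hσ'def, Function.update_self]
      intro hcon
      exact pm_ne_zero (hσ j) (by linarith)
    · intro i hi
      by_contra hij
      have heq : σ' i = σ i := by rw [hσ'def]; exact Function.update_of_ne hij _ _
      exact hi heq.symm


open Finset
noncomputable def C (n k : ℕ) : Fin n → ℝ := fun i => (-1 : ℝ) ^ ((i:ℕ) + k + 1 - n)

lemma C_pm (n k : ℕ) : ∀ i : Fin n, C n k i = 1 ∨ C n k i = -1 := by
  intro i
  rcases Nat.even_or_odd ((i:ℕ) + k + 1 - n) with h | h
  · left; exact h.neg_one_pow
  · right; exact h.neg_one_pow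

lemma C_chg (n k : ℕ) (hk : k ≤ n - 1) {p : ℕ} (hp : p < n - 1) :
    ext (C n k) p * ext (C n k) (p+1) < 0 ↔ n - 1 - k ≤ p := by
  have h1 : p < n := by omega
  have h2 : p + 1 < n := by omega
  rw [ext_lt _ h1, ext_lt _ h2]
  show (-1:ℝ)^(p + k + 1 - n) * (-1:ℝ)^(p + 1 + k + 1 - n) < 0 ↔ _
  by_cases hcase : n - 1 - k ≤ p
  · have ha : p + 1 + k + 1 - n = (p + k + 1 - n) + 1 := by omega
    rw [ha, ← pow_add]
    have : Odd ((p + k + 1 - n) + ((p + k + 1 - n) + 1)) := ⟨p + k + 1 - n, by omega⟩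
    rw [this.neg_one_pow]
    simpa using hcase
  · have ha : p + k + 1 - n = 0 := by omega
    have hb : p + 1 + k + 1 - n = 0 := by omega
    rw [ha, hb]
    norm_num
    omega
lemma C_var (n k : ℕ) (hn : 0 < n) (hk : k ≤ n - 1) : var (C n k) = k := by
  rw [var_eq_sum _ (fun i => pm_ne_zero (C_pm n k i))]
  have : ∀ p ∈ range (n-1), (if ext (C n k) p * ext (C n k) (p+1) < 0 then 1 else 0)
      = (if n - 1 - k ≤ p then 1 else 0) := by
    intro p hp
    simp only [mem_range] at hp
    by_cases h : n - 1 - k ≤ p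
    · rw [if_pos ((C_chg n k hk hp).mpr h), if_pos h]
    · rw [if_neg (fun hc => h ((C_chg n k hk hp).mp hc)), if_neg h]
  rw [Finset.sum_congr rfl this, ← Finset.card_filter]
  have he : (range (n-1)).filter (fun x => n - 1 - k ≤ x) = Finset.Ico (n-1-k) (n-1) := by
    ext x
    simp only [Finset.mem_filter, Finset.mem_range, Finset.mem_Ico]
    omega
  rw [he, Nat.card_Ico]
  omega

lemma pm_flip {a b : ℝ} (ha : a = 1 ∨ a = -1) (hb : b = 1 ∨ b = -1) (h : a * b < 0) :
    b = -a := by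
  rcases ha with rfl | rfl <;> rcases hb with rfl | rfl <;> revert h <;> norm_num

lemma pm_same {a b : ℝ} (ha : a = 1 ∨ a = -1) (hb : b = 1 ∨ b = -1) (h : ¬ a * b < 0) :
    b = a := by
  rcases ha with rfl | rfl <;> rcases hb with rfl | rfl <;> revert h <;> norm_num

lemma ext_pm {n : ℕ} {σ : Fin n → ℝ} (hσ : ∀ i, σ i = 1 ∨ σ i = -1) {i : ℕ} (h : i < n) :
    ext σ i = 1 ∨ ext σ i = -1 := by rw [ext_lt σ h]; exact hσ _

lemma nomove {n k : ℕ} (hn : 0 < n) (hk : k ≤ n - 1) (σ : Fin n → ℝ)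
    (hσ : ∀ i, σ i = 1 ∨ σ i = -1) (hσv : var σ = k)
    (H : ∀ p, p + 2 < n → ext σ p * ext σ (p+1) < 0 → ext σ (p+1) * ext σ (p+2) < 0) :
    σ = C n k ∨ σ = -C n k := by
  classical
  set T := (range (n-1)).filter (fun p => ext σ p * ext σ (p+1) < 0) with hT
  have hcard : T.card = k := by
    rw [hT, Finset.card_filter, ← var_eq_sum σ (fun i => pm_ne_zero (hσ i)), hσv]
  have up : ∀ p, ext σ p * ext σ (p+1) < 0 → ∀ q, p ≤ q → q < n - 1 →
      ext σ q * ext σ (q+1) < 0 := by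
    intro p hp
    intro q hpq
    refine Nat.le_induction (fun _ => hp) ?_ q hpq
    intro q _ ih hq1
    exact H q (by omega) (ih (by omega))
  have chg_iff : ∀ p, p < n - 1 → (ext σ p * ext σ (p+1) < 0 ↔ n - 1 - k ≤ p) := by
    intro p hp
    constructor
    · intro hchg
      have hsub : Finset.Ico p (n-1) ⊆ T := by
        intro q hq
        simp only [Finset.mem_Ico] at hq
        simp only [hT, Finset.mem_filter, Finset.mem_range]
        exact ⟨hq.2, up p hchg q hq.1 hq.2⟩
      have := Finset.card_le_card hsub
      rw [hcard, Nat.card_Ico] at this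
      omega
    · intro hge
      by_contra hnchg
      have hsub : T ⊆ Finset.Ico (p+1) (n-1) := by
        intro q hqT
        simp only [hT, Finset.mem_filter, Finset.mem_range] at hqT
        simp only [Finset.mem_Ico]
        refine ⟨?_, hqT.1⟩
        by_contra hle
        exact hnchg (up q hqT.2 p (by omega) hp)
      have := Finset.card_le_card hsub
      rw [hcard, Nat.card_Ico] at this
      omega
  -- pointwise identification
  have key : ∀ i, ∀ h : i < n, ext σ i = ext σ 0 * ext (C n k) i := by
    intro i
    induction i with
    | zero =>
      intro h
      have h0 : ext (C n k) 0 = 1 := by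
        rw [ext_lt _ hn]
        show (-1:ℝ)^(0 + k + 1 - n) = 1
        rw [show 0 + k + 1 - n = 0 by omega, pow_zero]
      rw [h0, mul_one]
    | succ i ih =>
      intro h
      have hin : i < n := by omega
      have hp : i < n - 1 := by omega
      have hC := C_chg n k hk hp
      have hs := chg_iff i hp
      have hCpm1 := ext_pm (C_pm n k) hin
      have hCpm2 := ext_pm (C_pm n k) h
      have hspm1 := ext_pm hσ hin
      have hspm2 := ext_pm hσ h
      by_cases hcase : n - 1 - k ≤ i
      · have h1 : ext σ (i+1) = -ext σ i := pm_flip hspm1 hspm2 (hs.mpr hcase)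
        have h2 : ext (C n k) (i+1) = -ext (C n k) i := pm_flip hCpm1 hCpm2 (hC.mpr hcase)
        rw [h1, h2, ih hin]
        ring
      · have h1 : ext σ (i+1) = ext σ i := pm_same hspm1 hspm2 (fun hc => hcase (hs.mp hc))
        have h2 : ext (C n k) (i+1) = ext (C n k) i :=
          pm_same hCpm1 hCpm2 (fun hc => hcase (hC.mp hc))
        rw [h1, h2, ih hin]
  have key' : ∀ i : Fin n, σ i = σ ⟨0, hn⟩ * C n k i := by
    intro i
    have := key i i.isLt
    rw [ext_lt σ i.isLt, ext_lt σ hn, ext_lt (C n k) i.isLt] at this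
    simpa using this
  rcases hσ ⟨0, hn⟩ with h0 | h0
  · left
    funext i
    rw [key' i, h0, one_mul]
  · right
    funext i
    rw [key' i, h0, Pi.neg_apply]
    ring

lemma ext_neg {n : ℕ} (σ : Fin n → ℝ) (i : ℕ) : ext (-σ) i = -ext σ i := by
  unfold ext
  by_cases h : i < n <;> simp [h]

lemma var_neg {n : ℕ} (σ : Fin n → ℝ) (hσ : ∀ i, σ i ≠ 0) : var (-σ) = var σ := by
  rw [var_eq_sum (-σ) (fun i => by simp [hσ i]), var_eq_sum σ hσ]
  exact Finset.sum_congr rfl fun p _ => by rw [ext_neg, ext_neg, neg_mul_neg]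

lemma adj_symm {n k : ℕ} {x y : Fin n → ℝ} (h : adjRel n k x y) : adjRel n k y x := by
  obtain ⟨⟨h1, h2, h3, h4⟩, h5 | h5⟩ := h
  · obtain ⟨i, hi, hu⟩ := h5
    exact ⟨⟨h2, h1, h4, h3⟩, Or.inl ⟨i, hi.symm, fun j hj => hu j hj.symm⟩⟩
  · obtain ⟨i, hi, hu⟩ := h5
    refine ⟨⟨h2, h1, h4, h3⟩, Or.inr ⟨i, fun hc => hi (by linarith),
      fun j hj => hu j (fun hc => hj (by linarith))⟩⟩

lemma adj_neg {n k : ℕ} {x y : Fin n → ℝ} (h : adjRel n k x y) : adjRel n k (-x) (-y) := by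
  obtain ⟨⟨h1, h2, h3, h4⟩, h5⟩ := h
  refine ⟨⟨?_, ?_, ?_, ?_⟩, ?_⟩
  · intro i; rcases h1 i with h | h <;> simp [h]
  · intro i; rcases h2 i with h | h <;> simp [h]
  · rw [var_neg x (fun i => pm_ne_zero (h1 i))]; exact h3
  · rw [var_neg y (fun i => pm_ne_zero (h2 i))]; exact h4
  · rcases h5 with ⟨i, hi, hu⟩ | ⟨i, hi, hu⟩
    · refine Or.inl ⟨i, ?_, ?_⟩
      · intro hc
        exact hi (neg_inj.mp hc)
      · intro j hj
        refine hu j (fun hc => hj ?_)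
        show -x j = -y j
        rw [hc]
    · refine Or.inr ⟨i, ?_, ?_⟩
      · intro hc
        apply hi
        have : -(x i) = -(-(y i)) := hc
        linarith
      · intro j hj
        refine hu j (fun hc => hj ?_)
        show -x j = -(-y j)
        simp [hc]

lemma reach {n k : ℕ} (hn : 0 < n) (hk : k ≤ n - 1) :
    ∀ d (σ : Fin n → ℝ), (∀ i, σ i = 1 ∨ σ i = -1) → var σ = k → n*n - Phi σ ≤ d →
    Relation.ReflTransGen (adjRel n k) σ (C n k) ∨
    Relation.ReflTransGen (adjRel n k) σ (-(C n k)) := by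
  intro d
  induction d with
  | zero =>
    intro σ hσ hv hd
    exfalso
    have := Phi_lt hn σ
    omega
  | succ d ih =>
    intro σ hσ hv hd
    by_cases hmv : ∃ p, p + 2 < n ∧ ext σ p * ext σ (p+1) < 0 ∧
        ¬ ext σ (p+1) * ext σ (p+2) < 0
    · obtain ⟨p, hp, hc, hnc⟩ := hmv
      obtain ⟨σ', hσ', hvar', hphi', huniq⟩ := move σ hσ p hp hc hnc
      have hadj : adjRel n k σ σ' := ⟨⟨hσ, hσ', hv, by rw [hvar', hv]⟩, Or.inl huniq⟩
      have hd' : n*n - Phi σ' ≤ d := by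
        have := Phi_lt hn σ'
        omega
      rcases ih σ' hσ' (by rw [hvar', hv]) hd' with h | h
      · exact Or.inl (Relation.ReflTransGen.head hadj h)
      · exact Or.inr (Relation.ReflTransGen.head hadj h)
    · push_neg at hmv
      rcases nomove hn hk σ hσ hv hmv with h | h
      · exact Or.inl (h ▸ Relation.ReflTransGen.refl)
      · exact Or.inr (h ▸ Relation.ReflTransGen.refl)

end Stmt8

theorem stmt8 (n k : ℕ) (hn : 0 < n) (hk : k ≤ n - 1)
    (σ τ : Fin n → ℝ)
    (hσ : ∀ i, σ i = 1 ∨ σ i = -1) (hτ : ∀ i, τ i = 1 ∨ τ i = -1)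
    (hσv : var σ = k) (hτv : var τ = k) :
    Relation.ReflTransGen (adjRel n k) σ τ ∨ Relation.ReflTransGen (adjRel n k) σ (-τ) := by
  have hs := Stmt8.reach hn hk (n*n) σ hσ hσv (Nat.sub_le _ _)
  have ht := Stmt8.reach hn hk (n*n) τ hτ hτv (Nat.sub_le _ _)
  have hRsymm : ∀ {a b : Fin n → ℝ}, Relation.ReflTransGen (adjRel n k) a b →
      Relation.ReflTransGen (adjRel n k) b a :=
    fun h => by
      induction h with
      | refl => exact Relation.ReflTransGen.refl
      | tail _ hab ih => exact Relation.ReflTransGen.head (Stmt8.adj_symm hab) ih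
  have negR : ∀ {a b : Fin n → ℝ}, Relation.ReflTransGen (adjRel n k) a b →
      Relation.ReflTransGen (adjRel n k) (-a) (-b) := by
    intro a b h
    induction h with
    | refl => exact Relation.ReflTransGen.refl
    | tail _ hab ih => exact ih.tail (Stmt8.adj_neg hab)
  rcases hs with h1 | h1 <;> rcases ht with h2 | h2
  · exact Or.inl (h1.trans (hRsymm h2))
  · have h3 := negR h2
    rw [neg_neg] at h3
    exact Or.inr (h1.trans (hRsymm h3))
  · exact Or.inr (h1.trans (hRsymm (negR h2)))
  · have h3 := negR h2
    exact Or.inl (h1.trans (hRsymm h2))
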